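/- The function W : (ℂ∖{0})² → ℂ defined by W(y_1, y_2) = y_1 − 2y_2 + 2·y_1^{−1}y_2^{−1} − y_2^{−1} − 2·y_1 y_2^{−1} + y_1^{2} y_2^{−1} has exactly 6 critical points, and each of these critical points is nondegenerate. -/

import Mathlib

/-- The potential function of the monotone fiber `L(2,2.5)` in `X̂₃` with the chosen bulk deformation (energy factor dropped). -/
noncomputable def W : ℂ → ℂ → ℂ := fun y₁ y₂ =>
  y₁ - 2 * y₂ + 2 * y₁⁻¹ * y₂⁻¹ - y₂⁻¹ - 2 * y₁ * y₂⁻¹ + y₁ ^ 2 * y₂⁻¹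

/-- A point of `(ℂ∖{0})²` is a critical point of `W` if both partial
derivatives of `W` vanish there. -/
def IsCritPt (p : ℂ × ℂ) : Prop :=
  p.1 ≠ 0 ∧ p.2 ≠ 0 ∧
    deriv (fun z => W z p.2) p.1 = 0 ∧ deriv (fun z => W p.1 z) p.2 = 0

/-- The Hessian determinant
`(∂²W/∂y₁²)(∂²W/∂y₂²) - (∂²W/∂y₁∂y₂)²` of `W` at a point. -/
noncomputable def hessDet (p : ℂ × ℂ) : ℂ :=
  deriv (deriv (fun z => W z p.2)) p.1 * deriv (deriv (fun z => W p.1 z)) p.2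
    - (deriv (fun w => deriv (fun z => W z w) p.1) p.2) ^ 2

lemma hasDerivAt_W_fst (b : ℂ) {z : ℂ} (hz : z ≠ 0) :
    HasDerivAt (fun t => W t b) (1 - 2 * (z ^ 2)⁻¹ * b⁻¹ - 2 * b⁻¹ + 2 * z * b⁻¹) z := by
  have h1 : HasDerivAt (fun t : ℂ => t⁻¹) (-(z ^ 2)⁻¹) z := hasDerivAt_inv hz
  have h := (((((hasDerivAt_id' (𝕜 := ℂ) (x := z)).sub_const (2 * b)).add
      ((h1.const_mul (2 : ℂ)).mul_const b⁻¹)).sub_const b⁻¹).sub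
      (((hasDerivAt_id' (𝕜 := ℂ) (x := z)).const_mul (2 : ℂ)).mul_const b⁻¹)).add
      ((hasDerivAt_pow 2 z).mul_const b⁻¹)
  refine h.congr_deriv ?_
  push_cast
  ring

lemma hasDerivAt_W_snd (a : ℂ) {w : ℂ} (hw : w ≠ 0) :
    HasDerivAt (fun t => W a t)
      (-2 - 2 * a⁻¹ * (w ^ 2)⁻¹ + (w ^ 2)⁻¹ + 2 * a * (w ^ 2)⁻¹ - a ^ 2 * (w ^ 2)⁻¹) w := by
  have h1 : HasDerivAt (fun t : ℂ => t⁻¹) (-(w ^ 2)⁻¹) w := hasDerivAt_inv hw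
  have h := (((((hasDerivAt_const w a).sub
      ((hasDerivAt_id' (𝕜 := ℂ) (x := w)).const_mul (2 : ℂ))).add
      (h1.const_mul (2 * a⁻¹))).sub h1).sub
      (h1.const_mul (2 * a))).add (h1.const_mul (a ^ 2))
  refine h.congr_deriv ?_
  ring

lemma deriv_W_fst (b : ℂ) {z : ℂ} (hz : z ≠ 0) :
    deriv (fun t => W t b) z = 1 - 2 * (z ^ 2)⁻¹ * b⁻¹ - 2 * b⁻¹ + 2 * z * b⁻¹ :=
  (hasDerivAt_W_fst b hz).deriv

lemma deriv_W_snd (a : ℂ) {w : ℂ} (hw : w ≠ 0) :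
    deriv (fun t => W a t) w
      = -2 - 2 * a⁻¹ * (w ^ 2)⁻¹ + (w ^ 2)⁻¹ + 2 * a * (w ^ 2)⁻¹ - a ^ 2 * (w ^ 2)⁻¹ :=
  (hasDerivAt_W_snd a hw).deriv

lemma deriv2_W_fst (b : ℂ) {z : ℂ} (hz : z ≠ 0) (hb : b ≠ 0) :
    deriv (deriv (fun t => W t b)) z = 4 * (z ^ 3)⁻¹ * b⁻¹ + 2 * b⁻¹ := by
  have hev : deriv (fun t => W t b)
      =ᶠ[nhds z] fun t => 1 - 2 * (t ^ 2)⁻¹ * b⁻¹ - 2 * b⁻¹ + 2 * t * b⁻¹ :=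
    (eventually_ne_nhds hz).mono fun t ht => deriv_W_fst b ht
  rw [hev.deriv_eq]
  have h1 : HasDerivAt (fun t : ℂ => (t ^ 2)⁻¹) (-(2 * z ^ 1) / (z ^ 2) ^ 2) z :=
    (hasDerivAt_pow 2 z).inv (pow_ne_zero 2 hz)
  have h := (((hasDerivAt_const z (1 : ℂ)).sub
      ((h1.const_mul (2 : ℂ)).mul_const b⁻¹)).sub_const (2 * b⁻¹)).add
      (((hasDerivAt_id' (𝕜 := ℂ) (x := z)).const_mul (2 : ℂ)).mul_const b⁻¹)
  rw [HasDerivAt.deriv (f := fun t => 1 - 2 * (t ^ 2)⁻¹ * b⁻¹ - 2 * b⁻¹ + 2 * t * b⁻¹) h, show -(2 * z ^ 1) / (z ^ 2) ^ 2 = -2 * (z ^ 3)⁻¹ by field_simp]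
  ring

lemma deriv2_W_snd (a : ℂ) {w : ℂ} (hw : w ≠ 0) :
    deriv (deriv (fun t => W a t)) w
      = 4 * a⁻¹ * (w ^ 3)⁻¹ - 2 * (w ^ 3)⁻¹ - 4 * a * (w ^ 3)⁻¹ + 2 * a ^ 2 * (w ^ 3)⁻¹ := by
  have hev : deriv (fun t => W a t)
      =ᶠ[nhds w] fun t =>
        -2 - 2 * a⁻¹ * (t ^ 2)⁻¹ + (t ^ 2)⁻¹ + 2 * a * (t ^ 2)⁻¹ - a ^ 2 * (t ^ 2)⁻¹ :=
    (eventually_ne_nhds hw).mono fun t ht => deriv_W_snd a ht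
  rw [hev.deriv_eq]
  have h1 : HasDerivAt (fun t : ℂ => (t ^ 2)⁻¹) (-(2 * w ^ 1) / (w ^ 2) ^ 2) w :=
    (hasDerivAt_pow 2 w).inv (pow_ne_zero 2 hw)
  have h := ((((hasDerivAt_const w (-2 : ℂ)).sub
      (h1.const_mul (2 * a⁻¹))).add h1).add
      (h1.const_mul (2 * a))).sub (h1.const_mul (a ^ 2))
  rw [HasDerivAt.deriv (f := fun t => -2 - 2 * a⁻¹ * (t ^ 2)⁻¹ + (t ^ 2)⁻¹ + 2 * a * (t ^ 2)⁻¹ - a ^ 2 * (t ^ 2)⁻¹) h, show -(2 * w ^ 1) / (w ^ 2) ^ 2 = -2 * (w ^ 3)⁻¹ by field_simp]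
  ring

lemma deriv_mixed (a : ℂ) {b : ℂ} (ha : a ≠ 0) (hb : b ≠ 0) :
    deriv (fun w => deriv (fun z => W z w) a) b
      = 2 * (a ^ 2)⁻¹ * (b ^ 2)⁻¹ + 2 * (b ^ 2)⁻¹ - 2 * a * (b ^ 2)⁻¹ := by
  have hfun : (fun w => deriv (fun z => W z w) a)
      = fun w => 1 - 2 * (a ^ 2)⁻¹ * w⁻¹ - 2 * w⁻¹ + 2 * a * w⁻¹ :=
    funext fun w => deriv_W_fst w ha
  rw [hfun]
  have h1 : HasDerivAt (fun t : ℂ => t⁻¹) (-(b ^ 2)⁻¹) b := hasDerivAt_inv hb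
  have h := (((hasDerivAt_const b (1 : ℂ)).sub
      ((h1.const_mul (2 * (a ^ 2)⁻¹)))).sub (h1.const_mul (2 : ℂ))).add
      (h1.const_mul (2 * a))
  have h2 : deriv (fun w : ℂ => 1 - 2 * (a ^ 2)⁻¹ * w⁻¹ - 2 * w⁻¹ + 2 * a * w⁻¹) b
      = 0 - 2 * (a ^ 2)⁻¹ * -(b ^ 2)⁻¹ - 2 * -(b ^ 2)⁻¹ + 2 * a * -(b ^ 2)⁻¹ := by
    exact h.deriv
  rw [h2]
  ring

lemma not_both_roots {a : ℂ} (hP : 9*a^6 - 18*a^5 + 7*a^4 - 14*a^3 + 16*a^2 + 8 = 0)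
    (hQ : 2 + 2*a^2 - 2*a^3 = 0) : False := by
  have : (18 : ℂ) = 0 := by
    linear_combination (2 + 4*a - 8*a^2) * hP
      + (1 + (-16 : ℂ)*a + 15*a^2 - a^3 + 54*a^4 - 36*a^5) * hQ
  norm_num at this

lemma crit_iff (a b : ℂ) : IsCritPt (a, b) ↔
    a ≠ 0 ∧ 9*a^6 - 18*a^5 + 7*a^4 - 14*a^3 + 16*a^2 + 8 = 0 ∧ a^2*b = 2 + 2*a^2 - 2*a^3 := by
  constructor
  · rintro ⟨ha, hb, h1, h2⟩
    simp only at ha hb h1 h2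
    have hia : a * a⁻¹ = 1 := mul_inv_cancel₀ ha
    have hib : b * b⁻¹ = 1 := mul_inv_cancel₀ hb
    rw [deriv_W_fst b ha] at h1
    rw [deriv_W_snd a hb] at h2
    have hG1 : a^2*b - (2 + 2*a^2 - 2*a^3) = 0 := by
      have key : a^2*b - (2 + 2*a^2 - 2*a^3)
          = (1 - 2 * (a ^ 2)⁻¹ * b⁻¹ - 2 * b⁻¹ + 2 * a * b⁻¹) * (a^2*b) := by
        linear_combination ((2) * b * b⁻¹ + (2) * a * b * a⁻¹ * b⁻¹) * hia + ((2) + (2) * a ^ 2 + (-2) * a ^ 3) * hib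
      rw [key, h1, zero_mul]
    have hG2 : -2*a*b^2 - 2 + a + 2*a^2 - a^3 = 0 := by
      have key : -2*a*b^2 - 2 + a + 2*a^2 - a^3
          = (-2 - 2 * a⁻¹ * (b ^ 2)⁻¹ + (b ^ 2)⁻¹ + 2 * a * (b ^ 2)⁻¹ - a ^ 2 * (b ^ 2)⁻¹)
            * (a*b^2) := by
        linear_combination ((2) * b ^ 2 * b⁻¹ ^ 2) * hia + ((2) + (2) * b * b⁻¹ + (-1) * a + (-1) * a * b * b⁻¹ + (-2) * a ^ 2 + (-2) * a ^ 2 * b * b⁻¹ + (1) * a ^ 3 + (1) * a ^ 3 * b * b⁻¹) * hib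
      rw [key, h2, zero_mul]
    refine ⟨ha, ?_, by linear_combination hG1⟩
    linear_combination (2*(a^2*b - (2 + 2*a^2 - 2*a^3)) - 4*a^2*b) * hG1 - a^3 * hG2
  · rintro ⟨ha, hP, hQ⟩
    have hb : b ≠ 0 := by
      intro h
      rw [h, mul_zero] at hQ
      exact not_both_roots hP hQ.symm
    have ha2b : a^2*b ≠ 0 := mul_ne_zero (pow_ne_zero 2 ha) hb
    have hia : a * a⁻¹ = 1 := mul_inv_cancel₀ ha
    have hib : b * b⁻¹ = 1 := mul_inv_cancel₀ hb
    refine ⟨ha, hb, ?_, ?_⟩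
    · rw [deriv_W_fst b ha]
      have key : (1 - 2 * (a ^ 2)⁻¹ * b⁻¹ - 2 * b⁻¹ + 2 * a * b⁻¹) * (a^2*b)
          = a^2*b - (2 + 2*a^2 - 2*a^3) := by
        linear_combination ((-1 : ℂ) * ((2) * b * b⁻¹ + (2) * a * b * a⁻¹ * b⁻¹) * hia + (-1 : ℂ) * ((2) + (2) * a ^ 2 + (-2) * a ^ 3) * hib)
      have : (1 - 2 * (a ^ 2)⁻¹ * b⁻¹ - 2 * b⁻¹ + 2 * a * b⁻¹) * (a^2*b) = 0 := by
        rw [key, hQ, sub_self]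
      exact (mul_eq_zero.mp this).resolve_right ha2b
    · rw [deriv_W_snd a hb]
      have hG2 : (-2*a*b^2 - 2 + a + 2*a^2 - a^3) * a^3 = 0 := by
        linear_combination -hP - (2*(a^2*b + (2 + 2*a^2 - 2*a^3))) * hQ
      have hG2' : -2*a*b^2 - 2 + a + 2*a^2 - a^3 = 0 :=
        (mul_eq_zero.mp hG2).resolve_right (pow_ne_zero 3 ha)
      have key : (-2 - 2 * a⁻¹ * (b ^ 2)⁻¹ + (b ^ 2)⁻¹ + 2 * a * (b ^ 2)⁻¹ - a ^ 2 * (b ^ 2)⁻¹)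
            * (a*b^2)
          = -2*a*b^2 - 2 + a + 2*a^2 - a^3 := by
        linear_combination ((-1 : ℂ) * ((2) * b ^ 2 * b⁻¹ ^ 2) * hia + (-1 : ℂ) * ((2) + (2) * b * b⁻¹ + (-1) * a + (-1) * a * b * b⁻¹ + (-2) * a ^ 2 + (-2) * a ^ 2 * b * b⁻¹ + (1) * a ^ 3 + (1) * a ^ 3 * b * b⁻¹) * hib)
      have : (-2 - 2 * a⁻¹ * (b ^ 2)⁻¹ + (b ^ 2)⁻¹ + 2 * a * (b ^ 2)⁻¹ - a ^ 2 * (b ^ 2)⁻¹)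
          * (a*b^2) = 0 := by rw [key, hG2']
      exact (mul_eq_zero.mp this).resolve_right (mul_ne_zero ha (pow_ne_zero 2 hb))

lemma hess_ne_zero {a b : ℂ} (h : IsCritPt (a, b)) : hessDet (a, b) ≠ 0 := by
  obtain ⟨ha, hP, hQ⟩ := (crit_iff a b).mp h
  have hb : b ≠ 0 := by
    intro h0
    rw [h0, mul_zero] at hQ
    exact not_both_roots hP hQ.symm
  have hia : a * a⁻¹ = 1 := mul_inv_cancel₀ ha
  have hib : b * b⁻¹ = 1 := mul_inv_cancel₀ hb
  intro h0
  rw [hessDet] at h0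
  simp only at h0
  rw [deriv2_W_fst b ha hb, deriv2_W_snd a hb, deriv_mixed a ha hb] at h0
  have key : ((4 * (a ^ 3)⁻¹ * b⁻¹ + 2 * b⁻¹) *
        (4 * a⁻¹ * (b ^ 3)⁻¹ - 2 * (b ^ 3)⁻¹ - 4 * a * (b ^ 3)⁻¹ + 2 * a ^ 2 * (b ^ 3)⁻¹)
      - (2 * (a ^ 2)⁻¹ * (b ^ 2)⁻¹ + 2 * (b ^ 2)⁻¹ - 2 * a * (b ^ 2)⁻¹) ^ 2) * (a^4 * b^4)
      = 12 - 8*a - 24*a^2 + 24*a^3 - 8*a^4 := by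
    linear_combination ((12) * b ^ 4 * b⁻¹ ^ 4 + (-8) * a * b ^ 4 * b⁻¹ ^ 4 + (12) * a * b ^ 4 * a⁻¹ * b⁻¹ ^ 4 + (-24) * a ^ 2 * b ^ 4 * b⁻¹ ^ 4 + (-8) * a ^ 2 * b ^ 4 * a⁻¹ * b⁻¹ ^ 4 + (12) * a ^ 2 * b ^ 4 * a⁻¹ ^ 2 * b⁻¹ ^ 4 + (24) * a ^ 3 * b ^ 4 * b⁻¹ ^ 4 + (-24) * a ^ 3 * b ^ 4 * a⁻¹ * b⁻¹ ^ 4 + (-8) * a ^ 3 * b ^ 4 * a⁻¹ ^ 2 * b⁻¹ ^ 4 + (12) * a ^ 3 * b ^ 4 * a⁻¹ ^ 3 * b⁻¹ ^ 4 + (16) * a ^ 4 * b ^ 4 * a⁻¹ * b⁻¹ ^ 4 + (-16) * a ^ 4 * b ^ 4 * a⁻¹ ^ 2 * b⁻¹ ^ 4 + (8) * a ^ 5 * b ^ 4 * a⁻¹ ^ 2 * b⁻¹ ^ 4) * hia + ((12) + (12) * b * b⁻¹ + (12) * b ^ 2 * b⁻¹ ^ 2 + (12) * b ^ 3 * b⁻¹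 ^ 3 + (-8) * a + (-8) * a * b * b⁻¹ + (-8) * a * b ^ 2 * b⁻¹ ^ 2 + (-8) * a * b ^ 3 * b⁻¹ ^ 3 + (-24) * a ^ 2 + (-24) * a ^ 2 * b * b⁻¹ + (-24) * a ^ 2 * b ^ 2 * b⁻¹ ^ 2 + (-24) * a ^ 2 * b ^ 3 * b⁻¹ ^ 3 + (24) * a ^ 3 + (24) * a ^ 3 * b * b⁻¹ + (24) * a ^ 3 * b ^ 2 * b⁻¹ ^ 2 + (24) * a ^ 3 * b ^ 3 * b⁻¹ ^ 3 + (-8) * a ^ 4 + (-8) * a ^ 4 * b * b⁻¹ + (-8) * a ^ 4 * b ^ 2 * b⁻¹ ^ 2 + (-8) * a ^ 4 * b ^ 3 * b⁻¹ ^ 3) * hib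
  have hR : 12 - 8*a - 24*a^2 + 24*a^3 - 8*a^4 = 0 := by
    rw [← key, h0, zero_mul]
  have : (-21756498672698964 : ℂ) = 0 := by
    linear_combination ((-341476470066375 : ℂ) + (132880639228646 : ℂ) * a
        + (1275395227255766 : ℂ) * a ^ 2 + (488850129217582 : ℂ) * a ^ 3
        + (893229203841714 : ℂ) * a ^ 4 + (-918081148044960 : ℂ) * a ^ 5) * hR
      + ((-2207347628987808 : ℂ) + (-540797428909344 : ℂ) * a
        + (1610053646121488 : ℂ) * a ^ 2 + (-816072131595520 : ℂ) * a ^ 3) * hP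
  norm_num at this

open Polynomial in
noncomputable def pC : Polynomial ℂ :=
  C 9 * X ^ 6 - C 18 * X ^ 5 + C 7 * X ^ 4 - C 14 * X ^ 3 + C 16 * X ^ 2 + C 8

open Polynomial

lemma pC_natDegree : pC.natDegree = 6 := by
  unfold pC
  compute_degree!

lemma pC_ne_zero : pC ≠ 0 := by
  intro h
  have := pC_natDegree
  rw [h] at this
  simp at this

lemma eval_pC (z : ℂ) :
    pC.eval z = 9*z^6 - 18*z^5 + 7*z^4 - 14*z^3 + 16*z^2 + 8 := by
  simp [pC]

lemma deriv_pC :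
    pC.derivative = C 54 * X ^ 5 - C 90 * X ^ 4 + C 28 * X ^ 3 - C 42 * X ^ 2 + C 32 * X := by
  unfold pC
  simp only [derivative_add, derivative_sub, derivative_C_mul, derivative_X_pow, derivative_C]
  simp only [← mul_assoc, ← C_mul]
  norm_num

lemma eval_dpC (z : ℂ) :
    pC.derivative.eval z = 54*z^5 - 90*z^4 + 28*z^3 - 42*z^2 + 32*z := by
  rw [deriv_pC]
  simp

lemma pC_roots_nodup : pC.roots.Nodup := by
  rw [Multiset.nodup_iff_count_le_one]
  intro z
  rw [count_roots]
  by_contra hc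
  push_neg at hc
  rw [one_lt_rootMultiplicity_iff_isRoot pC_ne_zero] at hc
  obtain ⟨h0, h1⟩ := hc
  rw [IsRoot, eval_pC] at h0
  rw [IsRoot, eval_dpC] at h1
  have : (-7625264576380724304 : ℂ) = 0 := by
    linear_combination ((-953158072047590538 : ℂ) + (-2245327670845766048 : ℂ) * z
        + (4573309533685985246 : ℂ) * z ^ 2 + (-1395951510668216598 : ℂ) * z ^ 3
        + (524203999700773284 : ℂ) * z ^ 4) * h0
      + ((561331917711441512 : ℂ) + (69999794598565942 : ℂ) * z
        + (655354358982222789 : ℂ) * z ^ 2 + (-813884500048946696 : ℂ) * z ^ 3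
        + (261781029539190171 : ℂ) * z ^ 4 + (-87367333283462214 : ℂ) * z ^ 5) * h1
  norm_num at this

lemma pC_card : pC.roots.toFinset.card = 6 := by
  rw [Multiset.toFinset_card_of_nodup pC_roots_nodup,
    splits_iff_card_roots.mp (IsAlgClosed.splits pC), pC_natDegree]

lemma setEq : {p : ℂ × ℂ | IsCritPt p}
    = (fun z : ℂ => (z, (2 + 2*z^2 - 2*z^3)/z^2)) '' (pC.roots.toFinset : Set ℂ) := by
  ext ⟨a, b⟩
  simp only [Set.mem_setOf_eq, Set.mem_image, Finset.mem_coe, Multiset.mem_toFinset,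
    mem_roots pC_ne_zero, IsRoot, eval_pC]
  rw [crit_iff]
  constructor
  · rintro ⟨ha, hP, hQ⟩
    refine ⟨a, hP, ?_⟩
    rw [Prod.mk.injEq]
    refine ⟨rfl, ?_⟩
    rw [div_eq_iff (pow_ne_zero 2 ha)]
    linear_combination -hQ
  · rintro ⟨z, hz, heq⟩
    have hz0 : z ≠ 0 := by
      rintro rfl
      norm_num at hz
    injection heq with e1 e2
    subst e1
    subst e2
    refine ⟨hz0, hz, ?_⟩
    field_simp

lemma crit_count : {p : ℂ × ℂ | IsCritPt p}.ncard = 6 := by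
  rw [setEq, Set.ncard_image_of_injOn (fun x _ y _ h => congrArg Prod.fst h),
    Set.ncard_coe_finset, pC_card]

/-- `W` has exactly 6 critical points in `(ℂ∖{0})²`, and each of them is
nondegenerate (nonvanishing Hessian determinant). -/
theorem W_critical_points :
    {p : ℂ × ℂ | IsCritPt p}.ncard = 6 ∧
      ∀ p : ℂ × ℂ, IsCritPt p → hessDet p ≠ 0 := by
  refine ⟨crit_count, ?_⟩
  rintro ⟨a, b⟩ h
  exact hess_ne_zero h
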